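/- For the square-well potential, the symmetric Gamow function G (piecewise: (z̃/(z̃+z)) e^{iz̃a} e^{-iz(x+a)} for x < −a, cos(z̃x) for |x| ≤ a, (z̃/(z̃+z)) e^{iz̃a} e^{iz(x−a)} for x > a) is C¹ on ℝ and solves −½G'' + λχ_{[-a,a]}G = (z²/2)G away from x = ±a, provided z satisfies the odd resonance condition e^{2iaz̃}(z̃−z)/(z̃+z) = 1 with z̃ = √(z² − 2λ). -/

import Mathlib

private lemma aux_exp' (c d : ℂ) (x : ℝ) :
    HasDerivAt (fun t : ℝ => Complex.exp (c * t + d)) (c * Complex.exp (c * x + d)) x := by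
  have h : HasDerivAt (fun w : ℂ => Complex.exp (c * w + d)) (Complex.exp (c * x + d) * c) (x : ℂ) := by
    simpa using (((hasDerivAt_id (x : ℂ)).const_mul c).add_const d).cexp
  simpa [mul_comm] using h.comp_ofReal

private lemma aux_cos' (c : ℂ) (x : ℝ) :
    HasDerivAt (fun t : ℝ => Complex.cos (c * t)) (-(c * Complex.sin (c * x))) x := by
  have h : HasDerivAt (fun w : ℂ => Complex.cos (c * w)) (-Complex.sin (c * x) * c) (x : ℂ) := by
    simpa using ((hasDerivAt_id (x : ℂ)).const_mul c).ccos
  have := h.comp_ofReal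
  convert this using 1
  ring

private lemma aux_sin' (c : ℂ) (x : ℝ) :
    HasDerivAt (fun t : ℝ => Complex.sin (c * t)) (c * Complex.cos (c * x)) x := by
  have h : HasDerivAt (fun w : ℂ => Complex.sin (c * w)) (Complex.cos (c * x) * c) (x : ℂ) := by
    simpa using ((hasDerivAt_id (x : ℂ)).const_mul c).csin
  simpa [mul_comm] using h.comp_ofReal

theorem gamow_function_is_C1_and_solves_schroedinger
    (a lam : ℝ) (ha : 0 < a) (hlam : 0 < lam)
    (z zt : ℂ) (him : z.im < 0) (hzt : zt ^ 2 = z ^ 2 - 2 * (lam : ℂ))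
    (hsum : zt + z ≠ 0)
    (hres : Complex.exp (2 * Complex.I * a * zt) * (zt - z) / (zt + z) = 1)
    (G : ℝ → ℂ)
    (hG1 : ∀ x : ℝ, x < -a → G x =
      zt / (zt + z) * Complex.exp (Complex.I * zt * a) *
        Complex.exp (-(Complex.I * z * (x + a))))
    (hG2 : ∀ x : ℝ, |x| ≤ a → G x = Complex.cos (zt * x))
    (hG3 : ∀ x : ℝ, a < x → G x =
      zt / (zt + z) * Complex.exp (Complex.I * zt * a) *
        Complex.exp (Complex.I * z * (x - a))) :
    ContDiff ℝ 1 G ∧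
    ∀ x : ℝ, x ≠ -a → x ≠ a →
      -(1 / 2 : ℂ) * deriv (deriv G) x +
          (lam : ℂ) * Set.indicator (Set.Icc (-a) a) (fun _ => (1 : ℂ)) x * G x =
        (z ^ 2 / 2) * G x := by
  set C : ℂ := zt / (zt + z) * Complex.exp (Complex.I * zt * a) with hCdef
  set E : ℂ := Complex.exp (Complex.I * zt * (a : ℂ)) with hEdef
  have hE0 : E ≠ 0 := Complex.exp_ne_zero _
  have hres' : E ^ 2 * (zt - z) = zt + z := by
    have h2 : Complex.exp (2 * Complex.I * a * zt) = E ^ 2 := by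
      rw [hEdef, ← Complex.exp_nat_mul]
      norm_num
      ring_nf
    rw [div_eq_one_iff_eq hsum, h2] at hres
    exact hres
  have e1 : Complex.exp (zt * a * Complex.I) = E := by rw [hEdef]; ring_nf
  have e2 : Complex.exp (-(zt * a) * Complex.I) = E⁻¹ := by
    rw [show -(zt * (a : ℂ)) * Complex.I = -(zt * a * Complex.I) by ring, Complex.exp_neg, e1]
  have keyA : Complex.cos (zt * a) * (zt + z) = zt * E := by
    rw [Complex.cos, e1, e2]
    field_simp
    linear_combination -hres'
  have keyB : zt * Complex.sin (zt * a) * (zt + z) = -(Complex.I * z * (zt * E)) := by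
    rw [Complex.sin, e1, e2]
    field_simp
    linear_combination (-zt) * hres'
  have key1 : Complex.cos (zt * (a : ℂ)) = C := by
    rw [hCdef, div_mul_eq_mul_div, eq_div_iff hsum, keyA]
  have key2 : zt * Complex.sin (zt * (a : ℂ)) = -(Complex.I * z) * C := by
    rw [hCdef]
    rw [show -(Complex.I * z) * (zt / (zt + z) * E) = -(Complex.I * z * (zt * E)) / (zt + z) by
      field_simp]
    rw [eq_div_iff hsum, keyB]
  -- values at the matching points
  have hcast : ((-a : ℝ) : ℂ) = -(a : ℂ) := by push_cast; ring
  have hGa : G a = C := by rw [hG2 a (by rw [abs_of_pos ha])]; exact key1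
  have hGma : G (-a) = C := by
    rw [hG2 (-a) (by rw [abs_neg, abs_of_pos ha]), hcast, mul_neg, Complex.cos_neg]
    exact key1
  -- derivatives of the three smooth pieces
  have harg1 : ∀ t : ℝ, (-(Complex.I * z)) * (t : ℂ) + (-(Complex.I * z * a)) =
      -(Complex.I * z * ((t : ℂ) + (a : ℂ))) := fun t => by ring
  have harg3 : ∀ t : ℝ, (Complex.I * z) * (t : ℂ) + (-(Complex.I * z * a)) =
      Complex.I * z * ((t : ℂ) - (a : ℂ)) := fun t => by ring
  have hf1 : ∀ x : ℝ, HasDerivAt (fun t : ℝ => C * Complex.exp (-(Complex.I * z * (t + a))))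
      (-(Complex.I * z) * (C * Complex.exp (-(Complex.I * z * (x + a))))) x := by
    intro x
    have h := (aux_exp' (-(Complex.I * z)) (-(Complex.I * z * a)) x).const_mul C
    simp only [harg1] at h
    exact h.congr_deriv (by ring)
  have hf2 : ∀ x : ℝ, HasDerivAt (fun t : ℝ => Complex.cos (zt * t))
      (-(zt * Complex.sin (zt * x))) x := fun x => aux_cos' zt x
  have hf3 : ∀ x : ℝ, HasDerivAt (fun t : ℝ => C * Complex.exp (Complex.I * z * (t - a)))
      ((Complex.I * z) * (C * Complex.exp (Complex.I * z * (x - a)))) x := by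
    intro x
    have h := (aux_exp' (Complex.I * z) (-(Complex.I * z * a)) x).const_mul C
    simp only [harg3] at h
    exact h.congr_deriv (by ring)
  -- the candidate derivative
  set g : ℝ → ℂ := fun x =>
    if x < -a then -(Complex.I * z) * (C * Complex.exp (-(Complex.I * z * (x + a))))
    else if x ≤ a then -(zt * Complex.sin (zt * x))
    else (Complex.I * z) * (C * Complex.exp (Complex.I * z * (x - a))) with hgdef
  have hexp0L : Complex.exp (-(Complex.I * z * (((-a : ℝ) : ℂ) + (a : ℂ)))) = 1 := by
    rw [hcast]; norm_num
  have hexp0R : Complex.exp (Complex.I * z * ((a : ℂ) - (a : ℂ))) = 1 := by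
    norm_num
  -- g values at ±a
  have hgma : g (-a) = -(Complex.I * z) * C := by
    simp only [hgdef]
    rw [if_neg (lt_irrefl _), if_pos (by linarith : -a ≤ a), hcast, mul_neg, Complex.sin_neg]
    linear_combination key2
  have hga : g a = (Complex.I * z) * C := by
    simp only [hgdef]
    rw [if_neg (not_lt.2 (by linarith)), if_pos le_rfl]
    linear_combination -key2
  -- G has derivative g everywhere
  have hDG : ∀ x : ℝ, HasDerivAt G (g x) x := by
    intro x
    rcases lt_trichotomy x (-a) with hx | hx | hx
    · have hev : G =ᶠ[nhds x] fun t : ℝ => C * Complex.exp (-(Complex.I * z * (t + a))) := by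
        filter_upwards [Iio_mem_nhds hx] with t ht
        exact hG1 t ht
      have h := (hf1 x).congr_of_eventuallyEq hev
      have hgx : g x = -(Complex.I * z) * (C * Complex.exp (-(Complex.I * z * (x + a)))) := by
        simp only [hgdef]; rw [if_pos hx]
      rw [hgx]; exact h
    · subst hx
      have hL : HasDerivWithinAt G (-(Complex.I * z) * C) (Set.Iic (-a)) (-a) := by
        have h := (hf1 (-a)).hasDerivWithinAt (s := Set.Iic (-a))
        rw [hexp0L, mul_one] at h
        refine h.congr (fun y hy => ?_) ?_
        · rcases lt_or_eq_of_le (Set.mem_Iic.mp hy) with h1 | h1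
          · exact hG1 y h1
          · subst h1; rw [hGma, hexp0L, mul_one]
        · rw [hGma, hexp0L, mul_one]
      have hR : HasDerivWithinAt G (-(Complex.I * z) * C) (Set.Ici (-a)) (-a) := by
        have h := (hf2 (-a)).hasDerivWithinAt (s := Set.Ici (-a))
        have hval : -(zt * Complex.sin (zt * ((-a : ℝ) : ℂ))) = -(Complex.I * z) * C := by
          rw [hcast, mul_neg, Complex.sin_neg]
          linear_combination key2
        rw [hval] at h
        refine h.congr_of_eventuallyEq ?_ ?_
        · filter_upwards [self_mem_nhdsWithin,
            mem_nhdsWithin_of_mem_nhds (Iic_mem_nhds (by linarith : -a < a))] with t ht1 ht2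
          exact hG2 t (abs_le.2 ⟨Set.mem_Ici.mp ht1, Set.mem_Iic.mp ht2⟩)
        · exact hG2 (-a) (by rw [abs_neg, abs_of_pos ha])
      have h := hL.union hR
      rw [Set.Iic_union_Ici] at h
      rw [hgma]
      exact hasDerivWithinAt_univ.mp h
    · rcases lt_trichotomy x a with hx2 | hx2 | hx2
      · have hev : G =ᶠ[nhds x] fun t : ℝ => Complex.cos (zt * t) := by
          filter_upwards [Ioo_mem_nhds hx hx2] with t ht
          exact hG2 t (abs_le.2 ⟨le_of_lt ht.1, le_of_lt ht.2⟩)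
        have h := (hf2 x).congr_of_eventuallyEq hev
        have hgx : g x = -(zt * Complex.sin (zt * x)) := by
          simp only [hgdef]; rw [if_neg (not_lt.2 (by linarith)), if_pos (le_of_lt hx2)]
        rw [hgx]; exact h
      · rw [hx2]
        have hL : HasDerivWithinAt G ((Complex.I * z) * C) (Set.Iic a) a := by
          have h := (hf2 a).hasDerivWithinAt (s := Set.Iic a)
          have hval : -(zt * Complex.sin (zt * ((a : ℝ) : ℂ))) = (Complex.I * z) * C := by
            linear_combination -key2
          rw [hval] at h
          refine h.congr_of_eventuallyEq ?_ ?_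
          · filter_upwards [self_mem_nhdsWithin,
              mem_nhdsWithin_of_mem_nhds (Ioi_mem_nhds (by linarith : -a < a))] with t ht1 ht2
            exact hG2 t (abs_le.2 ⟨le_of_lt (Set.mem_Ioi.mp ht2), Set.mem_Iic.mp ht1⟩)
          · exact hG2 a (by rw [abs_of_pos ha])
        have hR : HasDerivWithinAt G ((Complex.I * z) * C) (Set.Ici a) a := by
          have h := (hf3 a).hasDerivWithinAt (s := Set.Ici a)
          rw [hexp0R, mul_one] at h
          refine h.congr (fun y hy => ?_) ?_
          · rcases lt_or_eq_of_le (Set.mem_Ici.mp hy) with h1 | h1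
            · exact hG3 y h1
            · rw [← h1, hGa, hexp0R, mul_one]
          · rw [hGa, hexp0R, mul_one]
        have h := hL.union hR
        rw [Set.Iic_union_Ici] at h
        rw [hga]
        exact hasDerivWithinAt_univ.mp h
      · have hev : G =ᶠ[nhds x] fun t : ℝ => C * Complex.exp (Complex.I * z * (t - a)) := by
          filter_upwards [Ioi_mem_nhds hx2] with t ht
          exact hG3 t ht
        have h := (hf3 x).congr_of_eventuallyEq hev
        have hgx : g x = (Complex.I * z) * (C * Complex.exp (Complex.I * z * (x - a))) := by
          simp only [hgdef]; rw [if_neg (not_lt.2 (by linarith)), if_neg (not_le.2 (by linarith))]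
        rw [hgx]; exact h
  have hdG : deriv G = g := funext fun x => (hDG x).deriv
  -- continuity of g
  have hc1 : Continuous fun t : ℝ =>
      -(Complex.I * z) * (C * Complex.exp (-(Complex.I * z * (t + a)))) := by
    fun_prop
  have hc2 : Continuous fun t : ℝ => -(zt * Complex.sin (zt * t)) := by fun_prop
  have hc3 : Continuous fun t : ℝ =>
      (Complex.I * z) * (C * Complex.exp (Complex.I * z * (t - a))) := by
    fun_prop
  have hgc : Continuous g := by
    rw [continuous_iff_continuousAt]
    intro x
    rcases lt_trichotomy x (-a) with hx | hx | hx
    · refine hc1.continuousAt.congr ?_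
      filter_upwards [Iio_mem_nhds hx] with t ht
      simp only [hgdef]; rw [if_pos (Set.mem_Iio.mp ht)]
    · subst hx
      have hL : ContinuousWithinAt g (Set.Iic (-a)) (-a) := by
        refine (hc1.continuousWithinAt).congr (fun y hy => ?_) ?_
        · rcases lt_or_eq_of_le (Set.mem_Iic.mp hy) with h1 | h1
          · simp only [hgdef]; rw [if_pos h1]
          · subst h1; rw [hgma, hexp0L, mul_one]
        · rw [hgma, hexp0L, mul_one]
      have hR : ContinuousWithinAt g (Set.Ici (-a)) (-a) := by
        refine (hc2.continuousWithinAt).congr_of_eventuallyEq ?_ ?_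
        · filter_upwards [self_mem_nhdsWithin,
            mem_nhdsWithin_of_mem_nhds (Iic_mem_nhds (by linarith : -a < a))] with t ht1 ht2
          simp only [hgdef]; rw [if_neg (not_lt.2 (Set.mem_Ici.mp ht1)), if_pos (Set.mem_Iic.mp ht2)]
        · simp only [hgdef]; rw [if_neg (lt_irrefl _), if_pos (by linarith : -a ≤ a)]
      have h := hL.union hR
      rw [Set.Iic_union_Ici] at h
      exact (continuousWithinAt_univ g (-a)).mp h
    · rcases lt_trichotomy x a with hx2 | hx2 | hx2
      · refine hc2.continuousAt.congr ?_
        filter_upwards [Ioo_mem_nhds hx hx2] with t ht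
        simp only [hgdef]; rw [if_neg (not_lt.2 (le_of_lt ht.1)), if_pos (le_of_lt ht.2)]
      · rw [hx2]
        have hL : ContinuousWithinAt g (Set.Iic a) a := by
          refine (hc2.continuousWithinAt).congr_of_eventuallyEq ?_ ?_
          · filter_upwards [self_mem_nhdsWithin,
              mem_nhdsWithin_of_mem_nhds (Ioi_mem_nhds (by linarith : -a < a))] with t ht1 ht2
            simp only [hgdef]; rw [if_neg (not_lt.2 (by linarith [Set.mem_Ioi.mp ht2])), if_pos (Set.mem_Iic.mp ht1)]
          · simp only [hgdef]; rw [if_neg (not_lt.2 (by linarith)), if_pos le_rfl]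
        have hR : ContinuousWithinAt g (Set.Ici a) a := by
          refine (hc3.continuousWithinAt).congr (fun y hy => ?_) ?_
          · rcases lt_or_eq_of_le (Set.mem_Ici.mp hy) with h1 | h1
            · simp only [hgdef]; rw [if_neg (not_lt.2 (by linarith)), if_neg (not_le.2 (by linarith))]
            · rw [← h1, hga, hexp0R, mul_one]
          · rw [hga, hexp0R, mul_one]
        have h := hL.union hR
        rw [Set.Iic_union_Ici] at h
        exact (continuousWithinAt_univ g a).mp h
      · refine hc3.continuousAt.congr ?_
        filter_upwards [Ioi_mem_nhds hx2] with t ht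
        simp only [hgdef]; rw [if_neg (not_lt.2 (by linarith [Set.mem_Ioi.mp ht])), if_neg (not_le.2 (by linarith [Set.mem_Ioi.mp ht]))]
  constructor
  · rw [contDiff_one_iff_deriv]
    exact ⟨fun x => (hDG x).differentiableAt, hdG ▸ hgc⟩
  · intro x hx1 hx2
    rw [hdG]
    rcases lt_trichotomy x (-a) with hx | hx | hx
    · have hev : g =ᶠ[nhds x] fun t : ℝ =>
          -(Complex.I * z) * (C * Complex.exp (-(Complex.I * z * (t + a)))) := by
        filter_upwards [Iio_mem_nhds hx] with t ht
        simp only [hgdef]; rw [if_pos (Set.mem_Iio.mp ht)]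
      have hd : deriv g x = -(Complex.I * z) *
          (-(Complex.I * z) * (C * Complex.exp (-(Complex.I * z * (x + a))))) := by
        rw [hev.deriv_eq]
        exact ((hf1 x).const_mul (-(Complex.I * z))).deriv
      rw [hd, hG1 x hx,
        Set.indicator_of_notMem (fun hc => absurd (Set.mem_Icc.mp hc).1 (not_le.2 hx))]
      linear_combination (-(1 / 2 : ℂ) * z ^ 2 * C *
        Complex.exp (-(Complex.I * z * (x + a)))) * Complex.I_sq
    · exact absurd hx hx1
    · rcases lt_trichotomy x a with hx2' | hx2' | hx2'
      · have hev : g =ᶠ[nhds x] fun t : ℝ => -(zt * Complex.sin (zt * t)) := by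
          filter_upwards [Ioo_mem_nhds hx hx2'] with t ht
          simp only [hgdef]; rw [if_neg (not_lt.2 (le_of_lt ht.1)), if_pos (le_of_lt ht.2)]
        have hd : deriv g x = -(zt * (zt * Complex.cos (zt * x))) := by
          rw [hev.deriv_eq]
          exact (((aux_sin' zt x).const_mul zt).neg).deriv
        rw [hd, hG2 x (abs_le.2 ⟨le_of_lt hx, le_of_lt hx2'⟩),
          Set.indicator_of_mem (Set.mem_Icc.mpr ⟨le_of_lt hx, le_of_lt hx2'⟩)]
        linear_combination (Complex.cos (zt * x) * (1 / 2 : ℂ)) * hzt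
      · exact absurd hx2' hx2
      · have hev : g =ᶠ[nhds x] fun t : ℝ =>
            (Complex.I * z) * (C * Complex.exp (Complex.I * z * (t - a))) := by
          filter_upwards [Ioi_mem_nhds hx2'] with t ht
          simp only [hgdef]; rw [if_neg (not_lt.2 (by linarith [Set.mem_Ioi.mp ht])), if_neg (not_le.2 (by linarith [Set.mem_Ioi.mp ht]))]
        have hd : deriv g x = (Complex.I * z) *
            ((Complex.I * z) * (C * Complex.exp (Complex.I * z * (x - a)))) := by
          rw [hev.deriv_eq]
          exact ((hf3 x).const_mul (Complex.I * z)).deriv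
        rw [hd, hG3 x hx2',
          Set.indicator_of_notMem (fun hc => absurd (Set.mem_Icc.mp hc).2 (not_le.2 hx2'))]
        linear_combination (-(1 / 2 : ℂ) * z ^ 2 * C *
          Complex.exp (Complex.I * z * (x - a))) * Complex.I_sq
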